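/- arXiv:1703.06866 — 3 statements merged into one kernel-verified Lean document; each statement's English description precedes it below -/
import Mathlib

section
/- Let q > 1 be a squarefree integer and θ = λ√q with λ a positive rational. Then there exists a point M in the plane of the equilateral triangle with side θ at rational distance from all three vertices if and only if there exist rationals a, b, e, r, s with e ≠ 0 satisfying a² + 3b² = q, (a+e)² + 3(b+e)² = q·r², and (a−e)² + 3(b+e)² = q·s². -/
noncomputable section

abbrev Pt := EuclideanSpace ℝ (Fin 2)

def IsRat (x : ℝ) : Prop := ∃ q : ℚ, (q : ℝ) = x

/-- `θ` is "good": some point of the plane is at rational distance from all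
vertices of an equilateral triangle of side length `θ`. -/
def Good (θ : ℝ) : Prop :=
  ∃ A B C M : Pt, dist A B = θ ∧ dist B C = θ ∧ dist C A = θ ∧
    IsRat (dist M A) ∧ IsRat (dist M B) ∧ IsRat (dist M C)

private lemma dist_sq' (x y : Pt) : (dist x y)^2 = (x 0 - y 0)^2 + (x 1 - y 1)^2 := by
  rw [EuclideanSpace.dist_eq, Fin.sum_univ_two, Real.sq_sqrt (by positivity)]
  simp [Real.dist_eq, sq_abs]

private lemma dist_formula (x y : Pt) :
    dist x y = Real.sqrt ((x 0 - y 0)^2 + (x 1 - y 1)^2) := by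
  rw [EuclideanSpace.dist_eq, Fin.sum_univ_two]
  congr 1
  simp [Real.dist_eq, sq_abs]

private def mk2 (x y : ℝ) : Pt := (WithLp.equiv 2 (Fin 2 → ℝ)).symm ![x, y]

private lemma dist_mk (x0 x1 y0 y1 : ℝ) :
    dist (mk2 x0 x1) (mk2 y0 y1) = Real.sqrt ((x0-y0)^2 + (x1-y1)^2) := by
  rw [dist_formula]
  simp [mk2]

private lemma no_rat_sq (q : ℤ) (hq : 1 < q) (hsf : Squarefree q) (x : ℚ) : x^2 ≠ (q:ℚ) := by
  intro h
  have hsq : IsSquare (q:ℚ) := ⟨x, by rw [← h]; ring⟩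
  rw [Rat.isSquare_intCast_iff] at hsq
  obtain ⟨k, hk⟩ := hsq
  have hu := hsf k (by rw [hk])
  have hk1 : k = 1 ∨ k = -1 := Int.isUnit_iff.mp hu
  rcases hk1 with h1 | h1 <;> simp [h1] at hk <;> omega

theorem stmt_6 (q : ℤ) (hq : 1 < q) (hsf : Squarefree q) (lam : ℚ) (hlam : 0 < lam) :
    Good ((lam : ℝ) * Real.sqrt q) ↔
      ∃ a b e r s : ℚ, e ≠ 0 ∧
        a ^ 2 + 3 * b ^ 2 = q ∧
        (a + e) ^ 2 + 3 * (b + e) ^ 2 = q * r ^ 2 ∧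
        (a - e) ^ 2 + 3 * (b + e) ^ 2 = q * s ^ 2 := by
  have hq0R : (0:ℝ) ≤ (q:ℝ) := by exact_mod_cast (by omega : (0:ℤ) ≤ q)
  have hqQ : (q:ℚ) ≠ 0 := by exact_mod_cast (by omega : q ≠ 0)
  have hl : lam ≠ 0 := ne_of_gt hlam
  have hθ2 : ((lam:ℝ) * Real.sqrt q)^2 = (lam:ℝ)^2 * q := by
    rw [mul_pow, Real.sq_sqrt hq0R]
  constructor
  · rintro ⟨A, B, C, M, hAB, hBC, hCA, ⟨ph, hp⟩, ⟨mh, hm⟩, ⟨nh, hn⟩⟩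
    -- squared-distance equations in coordinates
    have e1 : (B 0 - A 0)^2 + (B 1 - A 1)^2 = (lam:ℝ)^2 * q := by
      have h := dist_sq' B A; rw [dist_comm B A, hAB] at h; rw [← h]; exact hθ2
    have e2 : (C 0 - A 0)^2 + (C 1 - A 1)^2 = (lam:ℝ)^2 * q := by
      have h := dist_sq' C A; rw [hCA] at h; rw [← h]; exact hθ2
    have e3 : (B 0 - C 0)^2 + (B 1 - C 1)^2 = (lam:ℝ)^2 * q := by
      have h := dist_sq' B C; rw [hBC] at h; rw [← h]; exact hθ2
    have e4 : (M 0 - A 0)^2 + (M 1 - A 1)^2 = ((ph:ℚ):ℝ)^2 := by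
      have h := dist_sq' M A; rw [← hp] at h; rw [← h]
    have e5 : (M 0 - B 0)^2 + (M 1 - B 1)^2 = ((mh:ℚ):ℝ)^2 := by
      have h := dist_sq' M B; rw [← hm] at h; rw [← h]
    have e6 : (M 0 - C 0)^2 + (M 1 - C 1)^2 = ((nh:ℚ):ℝ)^2 := by
      have h := dist_sq' M C; rw [← hn] at h; rw [← h]
    -- inner products
    have hZ : (B 0 - A 0)*(C 0 - A 0) + (B 1 - A 1)*(C 1 - A 1) = (lam:ℝ)^2*q/2 := by
      linear_combination e1/2 + e2/2 - e3/2
    have hXX : (B 0 - A 0)*(M 0 - A 0) + (B 1 - A 1)*(M 1 - A 1)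
        = (((ph:ℚ):ℝ)^2 + (lam:ℝ)^2*q - ((mh:ℚ):ℝ)^2)/2 := by
      linear_combination e4/2 + e1/2 - e5/2
    have hYY : (C 0 - A 0)*(M 0 - A 0) + (C 1 - A 1)*(M 1 - A 1)
        = (((ph:ℚ):ℝ)^2 + (lam:ℝ)^2*q - ((nh:ℚ):ℝ)^2)/2 := by
      linear_combination e4/2 + e2/2 - e6/2
    have keyc : ((B 0 - A 0)^2 + (B 1 - A 1)^2) *
          (((C 0 - A 0)^2 + (C 1 - A 1)^2) * ((M 0 - A 0)^2 + (M 1 - A 1)^2))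
        - ((B 0 - A 0)*(C 0 - A 0) + (B 1 - A 1)*(C 1 - A 1))^2 *
          ((M 0 - A 0)^2 + (M 1 - A 1)^2)
        = ((B 0 - A 0)*(M 0 - A 0) + (B 1 - A 1)*(M 1 - A 1))^2 *
            ((C 0 - A 0)^2 + (C 1 - A 1)^2)
          - 2*((B 0 - A 0)*(M 0 - A 0) + (B 1 - A 1)*(M 1 - A 1)) *
              ((C 0 - A 0)*(M 0 - A 0) + (C 1 - A 1)*(M 1 - A 1)) *
              ((B 0 - A 0)*(C 0 - A 0) + (B 1 - A 1)*(C 1 - A 1))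
          + ((C 0 - A 0)*(M 0 - A 0) + (C 1 - A 1)*(M 1 - A 1))^2 *
            ((B 0 - A 0)^2 + (B 1 - A 1)^2) := by ring
    rw [e1, e2, e4, hZ, hXX, hYY] at keyc
    have hbig : 3*((lam:ℝ)^2*q)^2*((ph:ℚ):ℝ)^2
        = ((lam:ℝ)^2*q)*((((ph:ℚ):ℝ)^2 + (lam:ℝ)^2*q - ((mh:ℚ):ℝ)^2)^2
          - (((ph:ℚ):ℝ)^2 + (lam:ℝ)^2*q - ((mh:ℚ):ℝ)^2)
            * (((ph:ℚ):ℝ)^2 + (lam:ℝ)^2*q - ((nh:ℚ):ℝ)^2)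
          + (((ph:ℚ):ℝ)^2 + (lam:ℝ)^2*q - ((nh:ℚ):ℝ)^2)^2) := by
      linear_combination 4*keyc
    have HQ : 3*(lam^2*(q:ℚ))^2*ph^2
        = (lam^2*(q:ℚ))*((ph^2 + lam^2*q - mh^2)^2
          - (ph^2 + lam^2*q - mh^2)*(ph^2 + lam^2*q - nh^2)
          + (ph^2 + lam^2*q - nh^2)^2) := by exact_mod_cast hbig
    have htq : lam^2*(q:ℚ) ≠ 0 := mul_ne_zero (pow_ne_zero 2 hl) hqQ
    have HQ' : 3*(lam^2*(q:ℚ))*ph^2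
        = (ph^2 + lam^2*q - mh^2)^2
          - (ph^2 + lam^2*q - mh^2)*(ph^2 + lam^2*q - nh^2)
          + (ph^2 + lam^2*q - nh^2)^2 := by
      apply mul_left_cancel₀ htq
      linear_combination HQ
    -- p ≠ 0
    have hph0 : ph ≠ 0 := by
      intro h0
      rw [h0] at hp
      have hMA : M = A := by
        rw [← dist_eq_zero (x := M) (y := A), ← hp]; norm_num
      have hmθ : (mh:ℝ) = (lam:ℝ) * Real.sqrt q := by rw [hm, hMA, hAB]
      have hs : Real.sqrt q = (mh:ℝ)/(lam:ℝ) := by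
        rw [eq_div_iff (by exact_mod_cast hl)]
        linear_combination -hmθ
      have hsq : ((mh/lam : ℚ):ℝ)^2 = ((q:ℤ):ℝ) := by
        push_cast
        rw [← hs]
        exact Real.sq_sqrt hq0R
      exact no_rat_sq q hq hsf (mh/lam) (by exact_mod_cast hsq)
    refine ⟨(((ph^2+lam^2*q-mh^2)/2) - ((ph^2+lam^2*q-nh^2)/2))/(lam*ph),
           (((ph^2+lam^2*q-mh^2)/2) + ((ph^2+lam^2*q-nh^2)/2))/(3*lam*ph),
           -((q:ℚ)*lam)/(2*ph), mh/ph, nh/ph, ?_, ?_, ?_, ?_⟩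
    · exact div_ne_zero (neg_ne_zero.mpr (mul_ne_zero hqQ hl))
        (mul_ne_zero two_ne_zero hph0)
    · field_simp
      linear_combination (-4) * HQ'
    · field_simp
      linear_combination (-4) * HQ'
    · field_simp
      linear_combination (-4) * HQ'
  · rintro ⟨a, b, e, r, s, he, h1, h2, h3⟩
    set al : ℚ := (a+3*b)/(-4*e) with hal
    set be : ℚ := (b-a)/(-4*e) with hbe
    have D1 : lam^2*(q:ℚ)*(al^2+3*be^2) = (lam*q/(2*e))^2 := by
      rw [hal, hbe]; field_simp; linear_combination 16 * h1
    have D2 : lam^2*(q:ℚ)*((al-1)^2+3*be^2) = (lam*q*r/(2*e))^2 := by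
      rw [hal, hbe]; field_simp; linear_combination 16 * h2
    have D3 : lam^2*(q:ℚ)*((2*al-1)^2+3*(2*be-1)^2) = (lam*q*s/e)^2 := by
      rw [hal, hbe]; field_simp; linear_combination 16 * h3
    have RD1 : (lam:ℝ)^2*(q:ℝ)*(((al:ℚ):ℝ)^2+3*((be:ℚ):ℝ)^2)
        = ((lam:ℝ)*(q:ℝ)/(2*(e:ℝ)))^2 := by exact_mod_cast D1
    have RD2 : (lam:ℝ)^2*(q:ℝ)*((((al:ℚ):ℝ)-1)^2+3*((be:ℚ):ℝ)^2)
        = ((lam:ℝ)*(q:ℝ)*((r:ℚ):ℝ)/(2*(e:ℝ)))^2 := by exact_mod_cast D2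
    have RD3 : (lam:ℝ)^2*(q:ℝ)*((2*((al:ℚ):ℝ)-1)^2+3*(2*((be:ℚ):ℝ)-1)^2)
        = ((lam:ℝ)*(q:ℝ)*((s:ℚ):ℝ)/(e:ℝ))^2 := by exact_mod_cast D3
    have hlR : (0:ℝ) ≤ (lam:ℝ) := by exact_mod_cast hlam.le
    have hθnn : (0:ℝ) ≤ (lam:ℝ) * Real.sqrt q := mul_nonneg hlR (Real.sqrt_nonneg _)
    have h3q : (0:ℝ) ≤ 3*(q:ℝ) := by linarith
    have hsq3 : (Real.sqrt (3*(q:ℝ)))^2 = 3*(q:ℝ) := Real.sq_sqrt h3q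
    have hsqq : (Real.sqrt (q:ℝ))^2 = (q:ℝ) := Real.sq_sqrt hq0R
    refine ⟨mk2 0 0, mk2 ((lam:ℝ)*Real.sqrt q) 0,
        mk2 ((lam:ℝ)*Real.sqrt q/2) ((lam:ℝ)*Real.sqrt (3*(q:ℝ))/2),
        mk2 ((lam:ℝ)*((al:ℚ):ℝ)*Real.sqrt q) ((lam:ℝ)*((be:ℚ):ℝ)*Real.sqrt (3*(q:ℝ))),
        ?_, ?_, ?_, ?_, ?_, ?_⟩
    · rw [dist_mk]
      have hin : ((0:ℝ)-(lam:ℝ)*Real.sqrt q)^2 + ((0:ℝ)-0)^2 = ((lam:ℝ)*Real.sqrt q)^2 := by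
        ring
      rw [hin, Real.sqrt_sq hθnn]
    · rw [dist_mk]
      have hin : ((lam:ℝ)*Real.sqrt q-(lam:ℝ)*Real.sqrt q/2)^2
          + ((0:ℝ)-(lam:ℝ)*Real.sqrt (3*(q:ℝ))/2)^2 = ((lam:ℝ)*Real.sqrt q)^2 := by
        linear_combination ((lam:ℝ)^2/4)*hsq3 - (3*(lam:ℝ)^2/4)*hsqq
      rw [hin, Real.sqrt_sq hθnn]
    · rw [dist_mk]
      have hin : ((lam:ℝ)*Real.sqrt q/2-0)^2
          + ((lam:ℝ)*Real.sqrt (3*(q:ℝ))/2-(0:ℝ))^2 = ((lam:ℝ)*Real.sqrt q)^2 := by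
        linear_combination ((lam:ℝ)^2/4)*hsq3 - (3*(lam:ℝ)^2/4)*hsqq
      rw [hin, Real.sqrt_sq hθnn]
    · refine ⟨|lam*q/(2*e)|, ?_⟩
      rw [dist_mk]
      have hin : ((lam:ℝ)*((al:ℚ):ℝ)*Real.sqrt q-0)^2
          + ((lam:ℝ)*((be:ℚ):ℝ)*Real.sqrt (3*(q:ℝ))-(0:ℝ))^2
          = ((lam:ℝ)*(q:ℝ)/(2*(e:ℝ)))^2 := by
        linear_combination ((lam:ℝ)^2*((al:ℚ):ℝ)^2)*hsqq
          + ((lam:ℝ)^2*((be:ℚ):ℝ)^2)*hsq3 + RD1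
      rw [hin, Real.sqrt_sq_eq_abs]
      push_cast
      ring
    · refine ⟨|lam*q*r/(2*e)|, ?_⟩
      rw [dist_mk]
      have hin : ((lam:ℝ)*((al:ℚ):ℝ)*Real.sqrt q-(lam:ℝ)*Real.sqrt q)^2
          + ((lam:ℝ)*((be:ℚ):ℝ)*Real.sqrt (3*(q:ℝ))-(0:ℝ))^2
          = ((lam:ℝ)*(q:ℝ)*((r:ℚ):ℝ)/(2*(e:ℝ)))^2 := by
        linear_combination ((lam:ℝ)^2*(((al:ℚ):ℝ)-1)^2)*hsqq
          + ((lam:ℝ)^2*((be:ℚ):ℝ)^2)*hsq3 + RD2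
      rw [hin, Real.sqrt_sq_eq_abs]
      push_cast
      ring
    · refine ⟨|lam*q*s/(2*e)|, ?_⟩
      rw [dist_mk]
      have hin : ((lam:ℝ)*((al:ℚ):ℝ)*Real.sqrt q-(lam:ℝ)*Real.sqrt q/2)^2
          + ((lam:ℝ)*((be:ℚ):ℝ)*Real.sqrt (3*(q:ℝ))-(lam:ℝ)*Real.sqrt (3*(q:ℝ))/2)^2
          = ((lam:ℝ)*(q:ℝ)*((s:ℚ):ℝ)/(2*(e:ℝ)))^2 := by
        linear_combination ((lam:ℝ)^2*(((al:ℚ):ℝ)-1/2)^2)*hsqq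
          + ((lam:ℝ)^2*(((be:ℚ):ℝ)-1/2)^2)*hsq3 + (1/4)*RD3
      rw [hin, Real.sqrt_sq_eq_abs]
      push_cast
      ring

end
end

section
/- For θ = √(25 + 12√3), there exists a point in the plane of the equilateral triangle of side θ whose distances to all three vertices are rational. -/
noncomputable section

def pt (a b : ℝ) : Pt := (WithLp.equiv 2 (Fin 2 → ℝ)).symm ![a, b]

lemma dist_pt (a b c d : ℝ) :
    dist (pt a b) (pt c d) = Real.sqrt ((a - c) ^ 2 + (b - d) ^ 2) := by
  rw [EuclideanSpace.dist_eq, Fin.sum_univ_two]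
  simp [pt, Real.dist_eq, sq_abs]

theorem stmt_17 : Good (Real.sqrt (25 + 12 * Real.sqrt 3)) := by
  set s := Real.sqrt 3 with hs_def
  have hs0 : (0:ℝ) ≤ s := Real.sqrt_nonneg 3
  have hs : s ^ 2 = 3 := Real.sq_sqrt (by norm_num)
  set θ := Real.sqrt (25 + 12 * s) with hθ_def
  have hθ : θ ^ 2 = 25 + 12 * s := Real.sq_sqrt (by nlinarith)
  have hθ0 : (0:ℝ) < θ := Real.sqrt_pos.mpr (by nlinarith)
  refine ⟨pt 0 0, pt θ 0, pt (θ / 2) (θ * s / 2), pt ((9 + 6 * s) / θ) (6 / θ),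
    ?_, ?_, ?_, ?_, ?_, ?_⟩
  · rw [dist_pt]
    rw [show ((0:ℝ) - θ) ^ 2 + (0 - 0) ^ 2 = θ ^ 2 by ring]
    exact Real.sqrt_sq hθ0.le
  · rw [dist_pt]
    rw [show (θ - θ / 2) ^ 2 + (0 - θ * s / 2) ^ 2 = θ ^ 2 * ((1 + s ^ 2) / 4) by ring,
      hs, show ((1:ℝ) + 3) / 4 = 1 by norm_num, mul_one]
    exact Real.sqrt_sq hθ0.le
  · rw [dist_pt]
    rw [show (θ / 2 - 0) ^ 2 + (θ * s / 2 - 0) ^ 2 = θ ^ 2 * ((1 + s ^ 2) / 4) by ring,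
      hs, show ((1:ℝ) + 3) / 4 = 1 by norm_num, mul_one]
    exact Real.sqrt_sq hθ0.le
  · refine ⟨3, ?_⟩
    rw [dist_pt]
    have h1 : ((9 + 6 * s) / θ - 0) ^ 2 + (6 / θ - 0) ^ 2 = 3 ^ 2 := by
      field_simp
      nlinarith [hθ, hs]
    rw [h1, Real.sqrt_sq (by norm_num)]
    norm_num
  · refine ⟨4, ?_⟩
    rw [dist_pt]
    have h1 : ((9 + 6 * s) / θ - θ) ^ 2 + (6 / θ - 0) ^ 2 = 4 ^ 2 := by
      field_simp
      nlinarith [hθ, hs]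
    rw [h1, Real.sqrt_sq (by norm_num)]
    norm_num
  · refine ⟨5, ?_⟩
    rw [dist_pt]
    have h1 : ((9 + 6 * s) / θ - θ / 2) ^ 2 + (6 / θ - θ * s / 2) ^ 2 = 5 ^ 2 := by
      field_simp
      linear_combination ((1 + s ^ 2) * θ ^ 2 + 12 * s ^ 3 + 25 * s ^ 2 - 36 * s - 111) * hθ +
        (144 * s ^ 2 + 600 * s + 769) * hs
    rw [h1, Real.sqrt_sq (by norm_num)]
    norm_num
end
end

section
/- Let θ = α + β·q^{1/4} > 0 where α, β are rationals with β ≠ 0 and q > 1 is a squarefree integer. Then there is no point in the plane of the equilateral triangle of side θ at rational distance from all three vertices. -/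
noncomputable section

lemma dist_sq_pt (X Y : Pt) : dist X Y ^ 2 = (X 0 - Y 0)^2 + (X 1 - Y 1)^2 := by
  rw [EuclideanSpace.dist_eq, Real.sq_sqrt (Finset.sum_nonneg fun i _ => sq_nonneg _)]
  simp [Fin.sum_univ_two, Real.dist_eq, sq_abs]

lemma ratlin {r : ℝ} (hirr : Irrational r) {a b : ℚ} (h : (a : ℝ) + (b : ℝ) * r = 0) :
    a = 0 ∧ b = 0 := by
  by_cases hb : b = 0
  · refine ⟨?_, hb⟩
    have : (a : ℝ) = 0 := by rw [hb] at h; push_cast at h; linarith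
    exact_mod_cast this
  · exfalso
    apply hirr
    refine ⟨-a / b, ?_⟩
    have hbR : (b : ℝ) ≠ 0 := by exact_mod_cast hb
    push_cast
    field_simp
    linarith

theorem stmt_19 (q : ℤ) (hq : 1 < q) (hsf : Squarefree q) (α β : ℚ) (hβ : β ≠ 0)
    (θ : ℝ) (hθdef : θ = (α : ℝ) + (β : ℝ) * (q : ℝ) ^ ((1 : ℝ) / 4)) (hθ : 0 < θ) :
    ¬ Good θ := by
  rintro ⟨A, B, C, M, hAB, hBC, hCA, ⟨ra, hra⟩, ⟨rb, hrb⟩, ⟨rc, hrc⟩⟩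
  -- coordinates, as opaque variables
  obtain ⟨x0, hx0⟩ : ∃ x : ℝ, x = B 0 - A 0 := ⟨_, rfl⟩
  obtain ⟨x1, hx1⟩ : ∃ x : ℝ, x = B 1 - A 1 := ⟨_, rfl⟩
  obtain ⟨y0, hy0⟩ : ∃ x : ℝ, x = C 0 - A 0 := ⟨_, rfl⟩
  obtain ⟨y1, hy1⟩ : ∃ x : ℝ, x = C 1 - A 1 := ⟨_, rfl⟩
  obtain ⟨z0, hz0⟩ : ∃ x : ℝ, x = M 0 - A 0 := ⟨_, rfl⟩
  obtain ⟨z1, hz1⟩ : ∃ x : ℝ, x = M 1 - A 1 := ⟨_, rfl⟩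
  obtain ⟨ra2, hra2⟩ : ∃ x : ℝ, x = (ra : ℝ)^2 := ⟨_, rfl⟩
  obtain ⟨rb2, hrb2⟩ : ∃ x : ℝ, x = (rb : ℝ)^2 := ⟨_, rfl⟩
  obtain ⟨rc2, hrc2⟩ : ∃ x : ℝ, x = (rc : ℝ)^2 := ⟨_, rfl⟩
  have h1 : θ^2 = x0^2 + x1^2 := by
    rw [← hAB, dist_sq_pt, hx0, hx1]; try ring
  have h2 : θ^2 = (y0 - x0)^2 + (y1 - x1)^2 := by
    rw [← hBC, dist_sq_pt, hx0, hx1, hy0, hy1]; try ring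
  have h3 : θ^2 = y0^2 + y1^2 := by
    rw [← hCA, dist_sq_pt, hy0, hy1]; try ring
  have hA : ra2 = z0^2 + z1^2 := by
    rw [hra2, hra, dist_sq_pt, hz0, hz1]; try ring
  have hB : rb2 = (z0 - x0)^2 + (z1 - x1)^2 := by
    rw [hrb2, hrb, dist_sq_pt, hx0, hx1, hz0, hz1]; try ring
  have hC : rc2 = (z0 - y0)^2 + (z1 - y1)^2 := by
    rw [hrc2, hrc, dist_sq_pt, hy0, hy1, hz0, hz1]; try ring
  -- Gram determinant relation: quadratic for θ² over ℚ
  have key : (θ^2)^3 - (ra2 + rb2 + rc2)*(θ^2)^2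
      + (ra2^2 + rb2^2 + rc2^2 - ra2*rb2 - rb2*rc2 - rc2*ra2)*(θ^2) = 0 := by
    linear_combination ((θ^2)*z1^2 + (θ^2)*z0^2 + (-1)*(θ^2)*rc2 + (-1)*(θ^2)*rb2 + (θ^2)*ra2 + (-1)*(θ^2)^2) * hA +
      ((-2)*(θ^2)*x1*z1 + (θ^2)*x1^2 + (-2)*(θ^2)*x0*z0 + (θ^2)*x0^2 + (-1)*(θ^2)*rc2 + (θ^2)*rb2 + (-1)*(θ^2)^2) * hB +
      ((-1)*(θ^2)*z1^2 + (-1)*(θ^2)*z0^2 + (-2)*(θ^2)*y1*z1 + (θ^2)*y1^2 + (-2)*(θ^2)*y0*z0 + (θ^2)*y0^2 + (2)*(θ^2)*x1*z1 + (-1)*(θ^2)*x1^2 + (2)*(θ^2)*x0*z0 + (-1)*(θ^2)*x0^2 + (θ^2)*rc2 + (-1)*(θ^2)^2) * hC +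
      ((4)*y1^2*z1^2 + (-4)*y1^3*z1 + y1^4 + (8)*y0*y1*z0*z1 + (-4)*y0*y1^2*z0 + (4)*y0^2*z0^2 + (-4)*y0^2*y1*z1 + (2)*y0^2*y1^2 + (-4)*y0^3*z0 + y0^4 + (-4)*x1*y1*z1^2 + (2)*x1*y1^2*z1 + (-4)*x1*y0*z0*z1 + (2)*x1*y0^2*z1 + x1^2*z1^2 + x1^2*z0^2 + (-1)*x1^2*y1^2 + (-1)*x1^2*y0^2 + (-4)*x0*y1*z0*z1 + (2)*x0*y1^2*z0 + (-4)*x0*y0*z0^2 + (2)*x0*y0^2*z0 + x0^2*z1^2 + x0^2*z0^2 + (-1)*x0^2*y1^2 + (-1)*x0^2*y0^2 + (-3)*(θ^2)*z1^2 + (-3)*(θ^2)*z0^2 + (2)*(θ^2)*y1*z1 + (-1)*(θ^2)*y1^2 + (2)*(θ^2)*y0*z0 + (-1)*(θ^2)*y0^2 + (2)*(θ^2)*x1*z1 + (2)*(θ^2)*x0*z0 + (θ^2)^2) * h1 +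
      ((2)*x1*y1*z1^2 + (-2)*x1*y1*z0^2 + (4)*x1*y0*z0*z1 + (-1)*x1^2*z1^2 + (-1)*x1^2*z0^2 + (4)*x0*y1*z0*z1 + (-2)*x0*y0*z1^2 + (2)*x0*y0*z0^2 + (-1)*x0^2*z1^2 + (-1)*x0^2*z0^2) * h2 +
      ((-2)*x1*y1*z1^2 + (2)*x1*y1*z0^2 + (-4)*x1*y0*z0*z1 + x1^2*z1^2 + (-3)*x1^2*z0^2 + (4)*x1^2*y1*z1 + (-1)*x1^2*y1^2 + (4)*x1^2*y0*z0 + (-1)*x1^2*y0^2 + (-2)*x1^3*z1 + x1^4 + (-4)*x0*y1*z0*z1 + (2)*x0*y0*z1^2 + (-2)*x0*y0*z0^2 + (8)*x0*x1*z0*z1 + (-2)*x0*x1^2*z0 + (-3)*x0^2*z1^2 + x0^2*z0^2 + (4)*x0^2*y1*z1 + (-1)*x0^2*y1^2 + (4)*x0^2*y0*z0 + (-1)*x0^2*y0^2 + (-2)*x0^2*x1*z1 + (2)*x0^2*x1^2 + (-2)*x0^3*z0 + x0^4) * h3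
  have hθ2 : θ^2 ≠ 0 := pow_ne_zero 2 (ne_of_gt hθ)
  obtain ⟨s, hs⟩ : ∃ x : ℚ, x = ra^2 + rb^2 + rc^2 := ⟨_, rfl⟩
  obtain ⟨c0, hc0⟩ : ∃ x : ℚ,
      x = ra^4 + rb^4 + rc^4 - ra^2*rb^2 - rb^2*rc^2 - rc^2*ra^2 := ⟨_, rfl⟩
  rw [hra2] at hA
  rw [hrb2] at hB
  rw [hrc2] at hC
  rw [hra2, hrb2, hrc2] at key
  have key2 : (θ^2)^2 - (s : ℝ)*(θ^2) + (c0 : ℝ) = 0 := by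
    have hfac : θ^2 * ((θ^2)^2 - (s : ℝ)*(θ^2) + (c0 : ℝ)) = 0 := by
      rw [hs, hc0]
      push_cast
      linear_combination key
    rcases mul_eq_zero.1 hfac with h | h
    · exact absurd h hθ2
    · exact h
  clear key h1 h2 h3 hA hB hC hx0 hx1 hy0 hy1 hz0 hz1 hra2 hrb2 hrc2 x0 x1 y0 y1 z0 z1 ra2 rb2 rc2
  clear hBC hCA hrc
  -- algebraic part
  obtain ⟨t, htdef⟩ : ∃ x : ℝ, x = (q : ℝ) ^ ((1 : ℝ) / 4) := ⟨_, rfl⟩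
  have hq0 : (0 : ℝ) < (q : ℝ) := by exact_mod_cast lt_trans one_pos hq
  have ht : 0 < t := htdef ▸ Real.rpow_pos_of_pos hq0 _
  have ht4 : t^4 = (q : ℝ) := by
    rw [htdef, ← Real.rpow_natCast ((q : ℝ) ^ ((1 : ℝ)/4)) 4, ← Real.rpow_mul hq0.le]
    norm_num
  have hirr : Irrational (t^2) := by
    have hsq : Real.sqrt ((t^2)^2) = t^2 := Real.sqrt_sq (sq_nonneg t)
    have he : (t^2)^2 = (q : ℝ) := by linear_combination ht4
    rw [he] at hsq
    rw [← hsq, irrational_sqrt_intCast_iff]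
    refine ⟨?_, by omega⟩
    rintro ⟨k, hk⟩
    have hu : IsUnit k := hsf k (by rw [hk])
    rcases Int.isUnit_iff.1 hu with h | h <;> rw [h] at hk <;> omega
  rw [hθdef, ← htdef] at key2
  -- case α = 0 leads to s = 0 and then θ = 0
  by_cases hα : α = 0
  · have hlin : ((β^4 * (q : ℚ) + c0 : ℚ) : ℝ) + ((-(s * β^2) : ℚ) : ℝ) * t^2 = 0 := by
      push_cast
      rw [hα] at key2
      push_cast at key2
      linear_combination key2 - (β : ℝ)^4 * ht4
    obtain ⟨-, hb0⟩ := ratlin hirr hlin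
    have hs0 : s = 0 := by
      have hβ2 : β^2 ≠ 0 := pow_ne_zero 2 hβ
      have : s * β^2 = 0 := by linarith [neg_eq_zero.1 hb0]
      exact (mul_eq_zero.1 this).resolve_right hβ2
    have hsum : ra^2 + rb^2 + rc^2 = 0 := by rw [← hs, hs0]
    have hra0 : ra = 0 := by nlinarith [sq_nonneg ra, sq_nonneg rb, sq_nonneg rc]
    have hrb0 : rb = 0 := by nlinarith [sq_nonneg ra, sq_nonneg rb, sq_nonneg rc]
    have hMA : dist M A = 0 := by rw [← hra, hra0]; norm_num
    have hMB : dist M B = 0 := by rw [← hrb, hrb0]; norm_num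
    have hneg : θ ≤ 0 := by
      rw [← hAB]
      calc dist A B ≤ dist A M + dist M B := dist_triangle _ _ _
        _ = 0 := by rw [dist_comm A M, hMA, hMB]; ring
    linarith
  -- case α ≠ 0
  · obtain ⟨W, hW⟩ : ∃ x : ℚ, x = 2*α*β*s - 4*α^3*β := ⟨_, rfl⟩
    obtain ⟨Z, hZ⟩ : ∃ x : ℚ, x = -(4*α*β^3) := ⟨_, rfl⟩
    obtain ⟨U, hU⟩ : ∃ x : ℚ, x = c0 + α^4 + β^4*(q : ℚ) - s*α^2 := ⟨_, rfl⟩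
    obtain ⟨V, hV⟩ : ∃ x : ℚ, x = 6*α^2*β^2 - s*β^2 := ⟨_, rfl⟩
    have heq : t * ((W : ℝ) + (Z : ℝ)*t^2) = (U : ℝ) + (V : ℝ)*t^2 := by
      rw [hW, hZ, hU, hV]
      push_cast
      linear_combination (-1 : ℝ) * key2 + (β : ℝ)^4 * ht4
    have hsq : ((U : ℝ) + (V : ℝ)*t^2)^2 = t^2 * ((W : ℝ) + (Z : ℝ)*t^2)^2 := by
      rw [← heq]; ring
    have hlin : ((U^2 + V^2*(q:ℚ) - 2*W*Z*(q:ℚ) : ℚ) : ℝ)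
        + ((2*U*V - W^2 - Z^2*(q:ℚ) : ℚ) : ℝ) * t^2 = 0 := by
      push_cast
      linear_combination hsq + (-(V : ℝ)^2 + 2*(W : ℝ)*(Z : ℝ) + (Z : ℝ)^2*t^2) * ht4
    obtain ⟨ha0, hb0⟩ := ratlin hirr hlin
    have ha0R : (U : ℝ)^2 + (V : ℝ)^2*(q : ℝ) - 2*(W : ℝ)*(Z : ℝ)*(q : ℝ) = 0 := by
      exact_mod_cast congrArg (fun x : ℚ => (x : ℝ)) ha0
    have hb0R : 2*(U : ℝ)*(V : ℝ) - (W : ℝ)^2 - (Z : ℝ)^2*(q : ℝ) = 0 := by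
      exact_mod_cast congrArg (fun x : ℚ => (x : ℝ)) hb0
    have hzero : ((U : ℝ) - (V : ℝ)*t^2)^2 + t^2 * ((W : ℝ) - (Z : ℝ)*t^2)^2 = 0 := by
      linear_combination ha0R - t^2 * hb0R
        + ((V : ℝ)^2 - 2*(W : ℝ)*(Z : ℝ) + (Z : ℝ)^2*t^2) * ht4
    have ht2 : (0 : ℝ) < t^2 := by positivity
    have hWZ : (W : ℝ) - (Z : ℝ)*t^2 = 0 := by
      have hbn : 0 ≤ t^2 * ((W : ℝ) - (Z : ℝ)*t^2)^2 := by positivity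
      have han : 0 ≤ ((U : ℝ) - (V : ℝ)*t^2)^2 := sq_nonneg _
      have hb0' : t^2 * ((W : ℝ) - (Z : ℝ)*t^2)^2 = 0 := by linarith
      have hsq0 : ((W : ℝ) - (Z : ℝ)*t^2)^2 = 0 :=
        (mul_eq_zero.1 hb0').resolve_left (ne_of_gt ht2)
      exact pow_eq_zero_iff two_ne_zero |>.1 hsq0
    have hZ0 : Z ≠ 0 := by
      rw [hZ, neg_ne_zero]
      exact mul_ne_zero (mul_ne_zero (by norm_num) hα) (pow_ne_zero 3 hβ)
    apply hirr
    refine ⟨W / Z, ?_⟩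
    have hZR : (Z : ℝ) ≠ 0 := by exact_mod_cast hZ0
    push_cast
    field_simp
    linarith
end
end
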